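/- Let A, B be n×n positive definite complex matrices with 0 < m·I ≤ A⁻¹, B⁻¹ ≤ M·I (0 < m ≤ M) and v ∈ [0,1]. Then Mm·((1−v)A + vB) + ((1−v)A⁻¹ + vB⁻¹) ≤ (M + m)·I in the Loewner order. -/

import Mathlib

open Matrix
open scoped ComplexOrder

noncomputable section
namespace Paper

variable {n : ℕ}

/-- Real part `(A + Aᴴ)/2`. -/
def re (A : Matrix (Fin n) (Fin n) ℂ) : Matrix (Fin n) (Fin n) ℂ := (2⁻¹ : ℂ) • (A + Aᴴ)

/-- Imaginary part `(A - Aᴴ)/(2i)`. -/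
def im (A : Matrix (Fin n) (Fin n) ℂ) : Matrix (Fin n) (Fin n) ℂ :=
  (2 * Complex.I)⁻¹ • (A - Aᴴ)

/-- The sector `S_α`. -/
def sector (α : ℝ) : Set ℂ := {z | 0 < z.re ∧ |z.im| ≤ z.re * Real.tan α}

/-- Numerical range of a matrix. -/
def numericalRange (A : Matrix (Fin n) (Fin n) ℂ) : Set ℂ :=
  {z | ∃ x : Fin n → ℂ, star x ⬝ᵥ x = 1 ∧ z = star x ⬝ᵥ (A *ᵥ x)}

/-- Loewner order: `X ≤ Y` iff `Y - X` is positive semidefinite. -/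
def loewnerLE (X Y : Matrix (Fin n) (Fin n) ℂ) : Prop := (Y - X).PosSemidef

lemma re_isHermitian (A : Matrix (Fin n) (Fin n) ℂ) : (re A).IsHermitian := by
  show ((2⁻¹ : ℂ) • (A + Aᴴ))ᴴ = (2⁻¹ : ℂ) • (A + Aᴴ)
  rw [Matrix.conjTranspose_smul, Matrix.conjTranspose_add,
    Matrix.conjTranspose_conjTranspose, add_comm Aᴴ A]
  simp

/-- The `j`-th largest element of `v` (descending sort). -/
def nthLargest (v : Fin n → ℝ) (j : Fin n) : ℝ :=
  ((List.ofFn v).mergeSort (fun a b => decide (b ≤ a))).get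
    (Fin.cast (by simp) j)

/-- `j`-th largest eigenvalue of a Hermitian matrix. -/
def eigDesc {A : Matrix (Fin n) (Fin n) ℂ} (hA : A.IsHermitian) (j : Fin n) : ℝ :=
  nthLargest hA.eigenvalues j

/-- `j`-th largest singular value. -/
def singular (A : Matrix (Fin n) (Fin n) ℂ) (j : Fin n) : ℝ :=
  nthLargest (fun i => Real.sqrt ((Matrix.isHermitian_conjTranspose_mul_self A).eigenvalues i)) j

/-- Square root of a positive semidefinite matrix (the former `Matrix.PosSemidef.sqrt`). -/
def posSemidefSqrt {A : Matrix (Fin n) (Fin n) ℂ} (hA : A.PosSemidef) : Matrix (Fin n) (Fin n) ℂ :=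
  (hA.1.eigenvectorUnitary : Matrix (Fin n) (Fin n) ℂ) *
    diagonal ((↑) ∘ (Real.sqrt ·) ∘ hA.1.eigenvalues) *
    (star hA.1.eigenvectorUnitary : Matrix (Fin n) (Fin n) ℂ)

/-- Weighted geometric mean of positive definite matrices. -/
def sharp (v : ℝ) {A B : Matrix (Fin n) (Fin n) ℂ} (hA : A.PosDef) (hB : B.PosDef) :
    Matrix (Fin n) (Fin n) ℂ :=
  posSemidefSqrt hA.posSemidef *
    (Matrix.isHermitian_mul_mul_conjTranspose (posSemidefSqrt hA.posSemidef)⁻¹ hB.1).cfc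
      (fun x => Real.rpow x v) * posSemidefSqrt hA.posSemidef

/-- Weighted arithmetic mean. -/
def arith (v : ℝ) (A B : Matrix (Fin n) (Fin n) ℂ) : Matrix (Fin n) (Fin n) ℂ :=
  (1 - v) • A + v • B

/-- Weighted harmonic mean. -/
def harm (v : ℝ) (A B : Matrix (Fin n) (Fin n) ℂ) : Matrix (Fin n) (Fin n) ℂ :=
  ((1 - v) • A⁻¹ + v • B⁻¹)⁻¹

/-- Kantorovich constant. -/
def K (h : ℝ) : ℝ := (h + 1) ^ 2 / (4 * h)


lemma real_smul_eq (r : ℝ) (X : Matrix (Fin n) (Fin n) ℂ) : r • X = (r : ℂ) • X := by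
  ext i j
  simp [Complex.real_smul]

lemma psd_real_smul {r : ℝ} (hr : 0 ≤ r) {X : Matrix (Fin n) (Fin n) ℂ}
    (hX : X.PosSemidef) : (r • X).PosSemidef := by
  rw [real_smul_eq]
  refine Matrix.PosSemidef.of_dotProduct_mulVec_nonneg ?_ ?_
  · unfold Matrix.IsHermitian
    rw [conjTranspose_smul, hX.1.eq]
    congr 1
    simp [Complex.conj_ofReal]
  · intro x
    rw [smul_mulVec, dotProduct_smul, smul_eq_mul]
    exact mul_nonneg (by exact_mod_cast Complex.zero_le_real.2 hr) (hX.dotProduct_mulVec_nonneg x)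

lemma key (m M : ℝ) (hm : 0 < m) {Y : Matrix (Fin n) (Fin n) ℂ} (hY : Y.PosDef)
    (h1 : (Y - m • 1).PosSemidef) (h2 : (M • (1 : Matrix (Fin n) (Fin n) ℂ) - Y).PosSemidef) :
    ((M + m) • (1 : Matrix (Fin n) (Fin n) ℂ) - ((M * m) • Y⁻¹ + Y)).PosSemidef := by
  have hH := hY.1
  set ev := hH.eigenvalues with hev
  have hnorm : ∀ i, (star ⇑(hH.eigenvectorBasis i)) ⬝ᵥ ⇑(hH.eigenvectorBasis i) = 1 := by
    intro i
    rw [dotProduct_comm, ← EuclideanSpace.inner_eq_star_dotProduct, inner_self_eq_norm_sq_to_K,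
      hH.eigenvectorBasis.orthonormal.1 i]
    norm_num
  have hquad : ∀ i, (star ⇑(hH.eigenvectorBasis i)) ⬝ᵥ (Y *ᵥ ⇑(hH.eigenvectorBasis i))
      = (ev i : ℂ) := by
    intro i
    rw [hH.mulVec_eigenvectorBasis]
    rw [dotProduct_smul, hnorm i]
    simp [Complex.real_smul]
    rfl
  have hlo : ∀ i, m ≤ ev i := by
    intro i
    have := h1.dotProduct_mulVec_nonneg ⇑(hH.eigenvectorBasis i)
    rw [sub_mulVec, dotProduct_sub, hquad i, smul_mulVec, one_mulVec,
      dotProduct_smul, hnorm i] at this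
    have : (0 : ℂ) ≤ ((ev i - m : ℝ) : ℂ) := by
      push_cast
      convert this using 1
      simp [Complex.real_smul]
    rw [Complex.zero_le_real] at this
    linarith
  have hhi : ∀ i, ev i ≤ M := by
    intro i
    have := h2.dotProduct_mulVec_nonneg ⇑(hH.eigenvectorBasis i)
    rw [sub_mulVec, dotProduct_sub, hquad i, smul_mulVec, one_mulVec,
      dotProduct_smul, hnorm i] at this
    have : (0 : ℂ) ≤ ((M - ev i : ℝ) : ℂ) := by
      push_cast
      convert this using 1
      simp [Complex.real_smul]
    rw [Complex.zero_le_real] at this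
    linarith
  have hpos : ∀ i, (0 : ℝ) < ev i := fun i => lt_of_lt_of_le hm (hlo i)
  set U : Matrix (Fin n) (Fin n) ℂ := (hH.eigenvectorUnitary : Matrix (Fin n) (Fin n) ℂ) with hUdef
  have hU1 : U * star U = 1 := (Matrix.mem_unitaryGroup_iff).mp hH.eigenvectorUnitary.2
  have hU2 : star U * U = 1 := (Matrix.mem_unitaryGroup_iff').mp hH.eigenvectorUnitary.2
  have hspec : Y = U * diagonal (fun i => (ev i : ℂ)) * star U := hH.spectral_theorem
  have hconj : ∀ P Q : Matrix (Fin n) (Fin n) ℂ,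
      (U * P * star U) * (U * Q * star U) = U * (P * Q) * star U := by
    intro P Q
    simp only [mul_assoc]
    rw [← mul_assoc (star U) U, hU2, one_mul]
  have hinv : Y⁻¹ = U * diagonal (fun i => ((ev i : ℂ))⁻¹) * star U := by
    apply inv_eq_right_inv
    rw [hspec, hconj, diagonal_mul_diagonal]
    have : (fun i => (ev i : ℂ) * ((ev i : ℂ))⁻¹) = fun _ => (1 : ℂ) := by
      funext i
      exact mul_inv_cancel₀ (by exact_mod_cast (hpos i).ne')
    rw [this, diagonal_one, mul_one, hU1]
  have hone : (1 : Matrix (Fin n) (Fin n) ℂ) = U * 1 * star U := by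
    rw [mul_one, hU1]
  have hkey : (M + m) • (1 : Matrix (Fin n) (Fin n) ℂ) - ((M * m) • Y⁻¹ + Y)
      = U * diagonal (fun i => ((M + m - M * m * (ev i)⁻¹ - ev i : ℝ) : ℂ)) * star U := by
    rw [hinv, hone]
    conv_lhs => rw [hspec]
    rw [real_smul_eq, real_smul_eq,
      ← smul_mul_assoc, ← mul_smul_comm, ← smul_mul_assoc, ← mul_smul_comm,
      ← add_mul, ← mul_add, ← sub_mul, ← mul_sub]
    congr 2
    rw [← diagonal_one]
    rw [show ((M + m : ℝ) : ℂ) • diagonal (fun _ : Fin n => (1 : ℂ))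
        = diagonal (fun _ : Fin n => ((M + m : ℝ) : ℂ)) by ext i j; simp [Matrix.diagonal_apply, Matrix.smul_apply, Matrix.one_apply, mul_ite]]
    rw [show ((M * m : ℝ) : ℂ) • diagonal (fun i : Fin n => ((ev i : ℂ))⁻¹)
        = diagonal (fun i : Fin n => ((M * m : ℝ) : ℂ) * ((ev i : ℂ))⁻¹) by ext i j; simp [Matrix.diagonal_apply, Matrix.smul_apply, Matrix.one_apply, mul_ite]]
    rw [diagonal_add, diagonal_sub]
    refine congrArg diagonal (funext fun i => ?_)
    try simp only [Pi.sub_apply, Pi.add_apply]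
    have hne : ((ev i : ℂ)) ≠ 0 := by exact_mod_cast (hpos i).ne'
    push_cast
    field_simp
    ring
  rw [hkey, Matrix.star_eq_conjTranspose U]
  exact Matrix.PosSemidef.mul_mul_conjTranspose_same
    (Matrix.posSemidef_diagonal_iff.mpr (fun i => by
      rw [Complex.zero_le_real]
      have h := hpos i
      have hl := hlo i
      have hh := hhi i
      have key2 : M * m ≤ (M + m - ev i) * ev i := by nlinarith
      have : M * m * (ev i)⁻¹ ≤ M + m - ev i := by
        rw [mul_inv_le_iff₀ h]
        linarith [key2]
      linarith)) U


theorem weighted_sum_le (A B : Matrix (Fin n) (Fin n) ℂ) (hA : A.PosDef) (hB : B.PosDef)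
    (v : ℝ) (hv : v ∈ Set.Icc 0 1) (m M : ℝ) (hm : 0 < m) (hmM : m ≤ M)
    (hA1 : loewnerLE (m • (1 : Matrix (Fin n) (Fin n) ℂ)) A⁻¹) (hA2 : loewnerLE A⁻¹ (M • 1))
    (hB1 : loewnerLE (m • (1 : Matrix (Fin n) (Fin n) ℂ)) B⁻¹) (hB2 : loewnerLE B⁻¹ (M • 1)) :
    loewnerLE ((M * m) • ((1 - v) • A + v • B) + ((1 - v) • A⁻¹ + v • B⁻¹))
      ((M + m) • 1) := by
  have hA1' : (A⁻¹ - m • 1).PosSemidef := hA1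
  have hA2' : (M • (1 : Matrix (Fin n) (Fin n) ℂ) - A⁻¹).PosSemidef := hA2
  have hB1' : (B⁻¹ - m • 1).PosSemidef := hB1
  have hB2' : (M • (1 : Matrix (Fin n) (Fin n) ℂ) - B⁻¹).PosSemidef := hB2
  have hDA := key m M hm (Matrix.posDef_inv_iff.mpr hA) hA1' hA2'
  have hDB := key m M hm (Matrix.posDef_inv_iff.mpr hB) hB1' hB2'
  rw [Matrix.nonsing_inv_nonsing_inv A ((Matrix.isUnit_iff_isUnit_det A).mp hA.isUnit)] at hDA
  rw [Matrix.nonsing_inv_nonsing_inv B ((Matrix.isUnit_iff_isUnit_det B).mp hB.isUnit)] at hDB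
  show ((M + m) • (1 : Matrix (Fin n) (Fin n) ℂ)
      - ((M * m) • ((1 - v) • A + v • B) + ((1 - v) • A⁻¹ + v • B⁻¹))).PosSemidef
  have hsplit : (M + m) • (1 : Matrix (Fin n) (Fin n) ℂ)
      - ((M * m) • ((1 - v) • A + v • B) + ((1 - v) • A⁻¹ + v • B⁻¹))
      = (1 - v) • ((M + m) • (1 : Matrix (Fin n) (Fin n) ℂ) - ((M * m) • A + A⁻¹))
        + v • ((M + m) • (1 : Matrix (Fin n) (Fin n) ℂ) - ((M * m) • B + B⁻¹)) := by
    module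
  rw [hsplit]
  exact (psd_real_smul (by linarith [hv.2]) hDA).add (psd_real_smul hv.1 hDB)


end Paper
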